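/- Let n > m > ℓ ≥ 2 be integers and let H = ⟨a, b, c | a^(2^n) = 1, b^(2^m) = a^(2^m), c^(2^ℓ) = 1, [b,a] = c, [c,a] = c^(-2), [c,b] = c^(-2)⟩. Let S be a commutative ring of characteristic 4 with a maximal ideal n satisfying 2 ∈ n and 2 ∉ n². Set C = c − 1 in SH and Θ = Δ(SH : n). Then 2C ∉ Θ⁴. -/

import Mathlib

/-- Relators of the group `H` from the paper:
`H = ⟨a,b,c ∣ a^(2^n) = 1, b^(2^m) = a^(2^m), c^(2^l) = 1, [b,a] = c, [c,a] = c⁻², [c,b] = c⁻²⟩`,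
where `[g,h] = g⁻¹h⁻¹gh`.  Generators: `0 ↦ a`, `1 ↦ b`, `2 ↦ c`. -/
def hrels (n m l : ℕ) : Set (FreeGroup (Fin 3)) :=
  {FreeGroup.of 0 ^ 2 ^ n, FreeGroup.of 1 ^ 2 ^ m * (FreeGroup.of 0 ^ 2 ^ m)⁻¹,
   FreeGroup.of 2 ^ 2 ^ l,
   (FreeGroup.of 1)⁻¹ * (FreeGroup.of 0)⁻¹ * FreeGroup.of 1 * FreeGroup.of 0 * (FreeGroup.of 2)⁻¹,
   (FreeGroup.of 2)⁻¹ * (FreeGroup.of 0)⁻¹ * FreeGroup.of 2 * FreeGroup.of 0 * FreeGroup.of 2 ^ 2,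
   (FreeGroup.of 2)⁻¹ * (FreeGroup.of 1)⁻¹ * FreeGroup.of 2 * FreeGroup.of 1 * FreeGroup.of 2 ^ 2}

/-- The group `H` of the paper. -/
def GrpH (n m l : ℕ) : Type := PresentedGroup (hrels n m l)

instance (n m l : ℕ) : Group (GrpH n m l) := by unfold GrpH; infer_instance

/-- The augmentation map `ε : SH → S`, sending `Σ α_h h` to `Σ α_h`. -/
noncomputable def aug (S : Type) [CommRing S] (G : Type) [Group G] :
    MonoidAlgebra S G →ₐ[S] S := MonoidAlgebra.lift S S G 1

/-- The relative augmentation ideal `Δ(SG : n) = ε⁻¹(n) = {x ∈ SG : ε(x) ∈ n}`. -/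
noncomputable def relAugIdeal (S : Type) [CommRing S] (nn : Ideal S) (G : Type) [Group G] :
    Ideal (MonoidAlgebra S G) := Ideal.comap (aug S G) nn

/-- `A = a - 1 ∈ SH`. -/
noncomputable def elA (S : Type) [CommRing S] (n m l : ℕ) : MonoidAlgebra S (GrpH n m l) :=
  MonoidAlgebra.of S (GrpH n m l) (PresentedGroup.of 0) - 1
/-- `B = b - 1 ∈ SH`. -/
noncomputable def elB (S : Type) [CommRing S] (n m l : ℕ) : MonoidAlgebra S (GrpH n m l) :=
  MonoidAlgebra.of S (GrpH n m l) (PresentedGroup.of 1) - 1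
/-- `C = c - 1 ∈ SH`. -/
noncomputable def elC (S : Type) [CommRing S] (n m l : ℕ) : MonoidAlgebra S (GrpH n m l) :=
  MonoidAlgebra.of S (GrpH n m l) (PresentedGroup.of 2) - 1


open DihedralGroup

/-- integer weights on D₁₆ -/
def mInt : DihedralGroup 8 → ℤ
  | .r i => [0,0,3,3,2,2,1,1].getD i.val 0
  | .sr i => [0,0,3,3,2,2,1,1].getD i.val 0

def U2 (b c x : DihedralGroup 8) : ℤ :=
  mInt (b*(c*x)) - mInt (c*x) - mInt (b*x) + mInt x

def DL (a b c x : DihedralGroup 8) : ℤ :=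
  U2 (a*b*a⁻¹) (a*c*a⁻¹) (a*x) - U2 b c x

/-- Nat-encoded versions for fast kernel computation.  Codes: `i ↦ r i`, `8+i ↦ sr i`. -/
def mulN (a b : ℕ) : ℕ :=
  if a < 8 then (if b < 8 then (a + b) % 8 else 8 + (b - a + 8) % 8)
  else (if b < 8 then 8 + (a - 8 + b) % 8 else (b - (a - 8) + 8) % 8)

def invN (a : ℕ) : ℕ := if a < 8 then (8 - a) % 8 else a

def mN (a : ℕ) : ℤ := [0,0,3,3,2,2,1,1].getD (a % 8) 0

def U2N (b c x : ℕ) : ℤ :=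
  mN (mulN b (mulN c x)) - mN (mulN c x) - mN (mulN b x) + mN x

def DLN (a b c x : ℕ) : ℤ :=
  U2N (mulN (mulN a b) (invN a)) (mulN (mulN a c) (invN a)) (mulN a x) - U2N b c x

def encD : DihedralGroup 8 → ℕ
  | .r i => i.val
  | .sr i => 8 + i.val

lemma encD_lt (g : DihedralGroup 8) : encD g < 16 := by
  cases g with
  | r i => exact lt_of_lt_of_le i.val_lt (by norm_num)
  | sr i => show 8 + i.val < 16; have := i.val_lt; omega

lemma encD_mul : ∀ g h : DihedralGroup 8, encD (g * h) = mulN (encD g) (encD h) := by decide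

lemma encD_inv : ∀ g : DihedralGroup 8, encD g⁻¹ = invN (encD g) := by decide

lemma mInt_enc : ∀ g : DihedralGroup 8, mInt g = mN (encD g) := by decide

lemma DL_enc (a b c x : DihedralGroup 8) :
    DL a b c x = DLN (encD a) (encD b) (encD c) (encD x) := by
  simp only [DL, DLN, U2, U2N, mInt_enc, encD_mul, encD_inv]

set_option maxRecDepth 100000 in
set_option maxHeartbeats 1000000 in
lemma natFacts : ∀ a ∈ [1, 8], ∀ b < 16, ∀ c < 16, ∀ x < 16,
    DLN a b c x % 2 = 0 ∧ (DLN a b c x - DLN a b c 0) % 4 = 0 := by decide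

/-- the closure predicate -/
def Good (a : DihedralGroup 8) : Prop :=
  ∀ b c x, DL a b c x % 2 = 0 ∧ (DL a b c x - DL a b c 1) % 4 = 0

lemma good_one : Good 1 := by
  intro b c x
  simp [DL, one_mul, mul_one, inv_one]

lemma DL_mul (a a' b c x : DihedralGroup 8) :
    DL (a * a') b c x = DL a (a'*b*a'⁻¹) (a'*c*a'⁻¹) (a'*x) + DL a' b c x := by
  simp only [DL, U2, mul_inv_rev]
  group

lemma good_mul {a a' : DihedralGroup 8} (ha : Good a) (ha' : Good a') : Good (a * a') := by
  intro b c x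
  have h1 := ha (a'*b*a'⁻¹) (a'*c*a'⁻¹) (a'*x)
  have h1' := ha (a'*b*a'⁻¹) (a'*c*a'⁻¹) (a'*1)
  have h1'' := ha (a'*b*a'⁻¹) (a'*c*a'⁻¹) 1
  have h2 := ha' b c x
  have h2' := ha' b c 1
  rw [DL_mul, DL_mul (x := 1)]
  constructor
  · omega
  · omega

lemma good_r1 : Good (r 1) := by
  intro b c x
  rw [DL_enc, DL_enc (x := 1)]
  have e1 : encD (r 1) = 1 := rfl
  have e0 : encD (1 : DihedralGroup 8) = 0 := rfl
  rw [e1, e0]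
  exact ⟨(natFacts 1 (by simp) _ (encD_lt b) _ (encD_lt c) _ (encD_lt x)).1,
    by
      have hx := (natFacts 1 (by simp) _ (encD_lt b) _ (encD_lt c) _ (encD_lt x)).2
      have h1 := (natFacts 1 (by simp) _ (encD_lt b) _ (encD_lt c) 0 (by norm_num)).2
      omega⟩

lemma good_sr0 : Good (sr 0) := by
  intro b c x
  rw [DL_enc, DL_enc (x := 1)]
  have e1 : encD (sr 0) = 8 := rfl
  have e0 : encD (1 : DihedralGroup 8) = 0 := rfl
  rw [e1, e0]
  exact ⟨(natFacts 8 (by simp) _ (encD_lt b) _ (encD_lt c) _ (encD_lt x)).1,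
    by
      have hx := (natFacts 8 (by simp) _ (encD_lt b) _ (encD_lt c) _ (encD_lt x)).2
      have h1 := (natFacts 8 (by simp) _ (encD_lt b) _ (encD_lt c) 0 (by norm_num)).2
      omega⟩

lemma good_all : ∀ a : DihedralGroup 8, Good a := by
  have hr : ∀ k : ℕ, Good ((r 1 : DihedralGroup 8) ^ k) := by
    intro k
    induction k with
    | zero => exact good_one
    | succ k ih => rw [pow_succ]; exact good_mul ih good_r1
  have hrz : ∀ i : ZMod 8, Good (r i) := by
    intro i
    have : (r 1 : DihedralGroup 8) ^ i.val = r i := by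
      rw [r_one_pow, ZMod.natCast_val, ZMod.cast_id]
    rw [← this]; exact hr i.val
  intro a
  cases a with
  | r i => exact hrz i
  | sr i =>
      have : (sr 0 : DihedralGroup 8) * r i = sr i := by rw [sr_mul_r, zero_add]
      rw [← this]; exact good_mul good_sr0 (hrz i)

section QSide
variable (S : Type) [CommRing S]

local notation "D16" => DihedralGroup 8
local notation "AQ" => MonoidAlgebra S (DihedralGroup 8)

noncomputable def lam (x : AQ) : S := ∑ g : D16, (mInt g : S) * x.coeff g

lemma AQ_add_apply (x y : AQ) (g : D16) : (x + y).coeff g = x.coeff g + y.coeff g := rfl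
lemma AQ_sub_apply (x y : AQ) (g : D16) : (x - y).coeff g = x.coeff g - y.coeff g := rfl
lemma AQ_smul_apply (s : S) (x : AQ) (g : D16) : (s • x).coeff g = s * x.coeff g := rfl

lemma lam_add (x y : AQ) : lam S (x + y) = lam S x + lam S y := by
  simp [lam, AQ_add_apply, mul_add, Finset.sum_add_distrib]

lemma lam_sub (x y : AQ) : lam S (x - y) = lam S x - lam S y := by
  simp [lam, AQ_sub_apply, mul_sub, Finset.sum_sub_distrib]

lemma lam_smul (s : S) (x : AQ) : lam S (s • x) = s * lam S x := by
  simp [lam, AQ_smul_apply, Finset.mul_sum, mul_left_comm, mul_comm]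

lemma lam_zero : lam S 0 = 0 := by simp [lam]

lemma lam_single (g : D16) (s : S) : lam S (MonoidAlgebra.single g s) = (mInt g : S) * s := by
  simp [lam, Finsupp.single_apply]

lemma lam_of (g : D16) : lam S (MonoidAlgebra.of S D16 g) = (mInt g : S) := by
  simp [MonoidAlgebra.of_apply, lam_single]

lemma lam_one : lam S 1 = 0 := by
  have : (1 : AQ) = MonoidAlgebra.of S D16 1 := rfl
  rw [this, lam_of, show mInt (1 : D16) = 0 from by decide]
  simp

lemma decomp (x : AQ) : x = ∑ g : D16, x.coeff g • MonoidAlgebra.of S D16 g := by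
  apply MonoidAlgebra.ext
  apply Finsupp.ext
  intro h
  rw [MonoidAlgebra.coeff_sum, Finsupp.finset_sum_apply]
  simp [MonoidAlgebra.of_apply, Finsupp.single_apply]

lemma mul_expandL (a z : AQ) : a * z = ∑ g : D16, a.coeff g • (MonoidAlgebra.of S D16 g * z) := by
  conv_lhs => rw [decomp S a]
  rw [Finset.sum_mul]
  simp [← smul_mul_assoc, MonoidAlgebra.smul_single', mul_one]

noncomputable def Pl (L : List D16) : AQ := (L.map fun g => MonoidAlgebra.of S D16 g - 1).prod

lemma of_mul_sub_one (g h : D16) :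
    MonoidAlgebra.of S D16 g * (MonoidAlgebra.of S D16 h - 1)
      = (MonoidAlgebra.of S D16 (g*h*g⁻¹) - 1) * MonoidAlgebra.of S D16 g := by
  rw [mul_sub, sub_mul, mul_one, one_mul, ← map_mul, ← map_mul]
  simp [inv_mul_cancel_right]

lemma conjList (g : D16) (L : List D16) :
    MonoidAlgebra.of S D16 g * Pl S L
      = Pl S (L.map fun h => g*h*g⁻¹) * MonoidAlgebra.of S D16 g := by
  induction L with
  | nil => simp [Pl]
  | cons h T ih =>
      simp only [Pl, List.map_cons, List.prod_cons] at ih ⊢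
      rw [← mul_assoc, of_mul_sub_one, mul_assoc, ih, ← mul_assoc]

lemma Pl2_of (b c x : D16) :
    Pl S [b, c] * MonoidAlgebra.of S D16 x
      = MonoidAlgebra.of S D16 (b*(c*x)) - MonoidAlgebra.of S D16 (c*x)
        - MonoidAlgebra.of S D16 (b*x) + MonoidAlgebra.of S D16 x := by
  simp only [Pl, List.map_cons, List.map_nil, List.prod_cons, List.prod_nil, mul_one,
    sub_mul, mul_sub, one_mul, mul_assoc, ← map_mul]
  abel

lemma lamPl2 (b c x : D16) :
    lam S (Pl S [b, c] * MonoidAlgebra.of S D16 x) = ((U2 b c x : ℤ) : S) := by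
  rw [Pl2_of, lam_add, lam_sub, lam_sub, lam_of, lam_of, lam_of, lam_of, U2]
  push_cast
  ring

lemma Pl3_cons (a b c : D16) : Pl S [a, b, c] = (MonoidAlgebra.of S D16 a - 1) * Pl S [b, c] := by
  simp [Pl]

lemma lamPl3 (a b c x : D16) :
    lam S (Pl S [a, b, c] * MonoidAlgebra.of S D16 x) = ((DL a b c x : ℤ) : S) := by
  rw [Pl3_cons, sub_mul, one_mul, sub_mul, mul_assoc, ← mul_assoc, conjList, mul_assoc,
    ← map_mul, lam_sub, List.map_cons, List.map_cons, List.map_nil, lamPl2, lamPl2, DL]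
  push_cast
  ring

lemma Pl4split (p q s t x : D16) :
    Pl S [p,q,s,t] * MonoidAlgebra.of S D16 x
      = Pl S [p,q,s] * MonoidAlgebra.of S D16 (t*x)
        - Pl S [p,q,s] * MonoidAlgebra.of S D16 x := by
  have h1 : Pl S [p,q,s,t] = Pl S [p,q,s] * (MonoidAlgebra.of S D16 t - 1) := by
    simp [Pl, mul_assoc]
  rw [h1, mul_assoc, sub_mul, one_mul, ← map_mul, ← mul_sub, mul_sub]

lemma lam_sum {α : Type} (t : Finset α) (f : α → MonoidAlgebra S (DihedralGroup 8)) :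
    lam S (∑ i ∈ t, f i) = ∑ i ∈ t, lam S (f i) := by
  classical
  induction t using Finset.induction_on with
  | empty => simp [lam_zero]
  | insert a t' hni ih => rw [Finset.sum_insert hni, Finset.sum_insert hni, lam_add, ih]

lemma mul_expandR (z a : AQ) :
    z * a = ∑ g : D16, a.coeff g • (z * MonoidAlgebra.of S D16 g) := by
  conv_lhs => rw [decomp S a]
  rw [Finset.mul_sum]
  simp only [mul_smul_comm]

lemma Pl_append (L M : List D16) : Pl S (L ++ M) = Pl S L * Pl S M := by
  simp [Pl]

lemma Pl_single (g : D16) : Pl S [g] = MonoidAlgebra.of S D16 g - 1 := by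
  simp [Pl]

variable (nn : Ideal S)

/-- generators: `u • (∏ (gᵢ - 1)) * h` with `u` in the ideal `c`, list of length `k`. -/
def Dset (k : ℕ) (c : Ideal S) : Set (MonoidAlgebra S (DihedralGroup 8)) :=
  {x | ∃ u ∈ c, ∃ L : List D16, ∃ h : D16,
    L.length = k ∧ x = u • (Pl S L * MonoidAlgebra.of S D16 h)}

def Eset : Set (MonoidAlgebra S (DihedralGroup 8)) :=
  {x | ∃ u ∈ nn ^ 2, ∃ y : MonoidAlgebra S (DihedralGroup 8), x = u • y}

noncomputable def W (k : ℕ) : Ideal (MonoidAlgebra S (DihedralGroup 8)) :=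
  Ideal.span (Dset S k ⊤ ∪ Dset S (k-1) nn ∪ Eset S nn)

lemma memW_of_D1 {k : ℕ} {x : AQ} (hx : x ∈ Dset S k ⊤) : x ∈ W S nn k :=
  Ideal.subset_span (Set.mem_union_left _ (Set.mem_union_left _ hx))

lemma memW_of_D2 {k : ℕ} {x : AQ} (hx : x ∈ Dset S (k-1) nn) : x ∈ W S nn k :=
  Ideal.subset_span (Set.mem_union_left _ (Set.mem_union_right _ hx))

lemma memW_of_E {k : ℕ} {x : AQ} (hx : x ∈ Eset S nn) : x ∈ W S nn k :=
  Ideal.subset_span (Set.mem_union_right _ hx)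

lemma gen_mul_gen (u v : S) (L M : List D16) (h h' : D16) :
    (u • (Pl S L * MonoidAlgebra.of S D16 h)) * (v • (Pl S M * MonoidAlgebra.of S D16 h')) =
      (u*v) • (Pl S (L ++ M.map fun g => h*g*h⁻¹) * MonoidAlgebra.of S D16 (h*h')) := by
  rw [smul_mul_smul_comm]
  congr 1
  rw [Pl_append, map_mul]
  rw [mul_assoc, ← mul_assoc (MonoidAlgebra.of S D16 h), conjList]
  simp only [mul_assoc]

lemma gen_mul_of (u : S) (L : List D16) (h g : D16) :
    (u • (Pl S L * MonoidAlgebra.of S D16 h)) * MonoidAlgebra.of S D16 g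
      = u • (Pl S L * MonoidAlgebra.of S D16 (h*g)) := by
  rw [smul_mul_assoc, mul_assoc, ← map_mul]

lemma class_mul_W1 (k : ℕ) (cI : Ideal S) (len : ℕ)
    (hA : ∀ w ∈ cI, ∀ L : List D16, L.length = len + 1 → ∀ h : D16,
            w • (Pl S L * MonoidAlgebra.of S D16 h) ∈ W S nn (k+1))
    (hB : ∀ w ∈ cI, ∀ v ∈ nn, ∀ L : List D16, L.length = len → ∀ h : D16,
            (w*v) • (Pl S L * MonoidAlgebra.of S D16 h) ∈ W S nn (k+1)) :
    ∀ y ∈ W S nn 1, ∀ u ∈ cI, ∀ L : List D16, L.length = len → ∀ h : D16,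
      (u • (Pl S L * MonoidAlgebra.of S D16 h)) * y ∈ W S nn (k+1) := by
  intro y hy
  induction hy using Submodule.span_induction with
  | mem y hygen =>
      intro u hu L hL h
      rcases hygen with (hyD1 | hyD0) | hyE
      · obtain ⟨v, -, M, h', hM, rfl⟩ := hyD1
        rw [gen_mul_gen]
        match M, hM with
        | [g], _ =>
          apply hA _ (Ideal.mul_mem_right v cI hu)
          simp [hL]
      · obtain ⟨v, hv, M, h', hM, rfl⟩ := hyD0
        rw [gen_mul_gen]
        match M, hM with
        | [], _ =>
          apply hB u hu v hv
          simpa using hL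
      · obtain ⟨v, hv, y', rfl⟩ := hyE
        rw [mul_smul_comm]
        exact memW_of_E S nn ⟨v, hv, _, rfl⟩
  | zero =>
      intro u hu L hL h
      rw [mul_zero]; exact zero_mem _
  | add y z hy hz ihy ihz =>
      intro u hu L hL h
      rw [mul_add]; exact add_mem (ihy u hu L hL h) (ihz u hu L hL h)
  | smul a y hy ih =>
      intro u hu L hL h
      rw [smul_eq_mul, ← mul_assoc,
        mul_expandR S (u • (Pl S L * MonoidAlgebra.of S D16 h)) a, Finset.sum_mul]
      apply Submodule.sum_mem
      intro g _
      rw [smul_mul_assoc, gen_mul_of]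
      have := ih u hu L hL (h * g)
      rw [Algebra.smul_def]
      exact Ideal.mul_mem_left _ _ this

lemma W_mul_W (k : ℕ) (hk : 1 ≤ k) :
    ∀ x ∈ W S nn k, ∀ y ∈ W S nn 1, x * y ∈ W S nn (k+1) := by
  intro x hx
  induction hx using Submodule.span_induction with
  | mem x hxgen =>
      intro y hy
      rcases hxgen with (hxD1 | hxD0) | hxE
      · obtain ⟨u, -, L, h, hL, rfl⟩ := hxD1
        refine class_mul_W1 S nn k ⊤ k ?_ ?_ y hy u trivial L hL h
        · intro w _ L' hL' h'
          exact memW_of_D1 S nn ⟨w, trivial, L', h', hL', rfl⟩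
        · intro w _ v hv L' hL' h'
          refine memW_of_D2 S nn ⟨w*v, Ideal.mul_mem_left nn w hv, L', h', ?_, rfl⟩
          simp [hL']
      · obtain ⟨u, hu, L, h, hL, rfl⟩ := hxD0
        refine class_mul_W1 S nn k nn (k-1) ?_ ?_ y hy u hu L hL h
        · intro w hw L' hL' h'
          refine memW_of_D2 S nn ⟨w, hw, L', h', ?_, rfl⟩
          omega
        · intro w hw v hv L' hL' h'
          refine memW_of_E S nn ⟨w*v, ?_, _, rfl⟩
          rw [pow_two]
          exact Ideal.mul_mem_mul hw hv
      · obtain ⟨v, hv, y', rfl⟩ := hxE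
        rw [smul_mul_assoc]
        exact memW_of_E S nn ⟨v, hv, _, rfl⟩
  | zero =>
      intro y hy; rw [zero_mul]; exact zero_mem _
  | add x z hx hz ihx ihz =>
      intro y hy; rw [add_mul]; exact add_mem (ihx y hy) (ihz y hy)
  | smul a x hx ih =>
      intro y hy
      rw [smul_eq_mul, mul_assoc]
      exact Ideal.mul_mem_left _ _ (ih y hy)

lemma mem_W1 (x : AQ) (hx : (∑ g : D16, x.coeff g) ∈ nn) : x ∈ W S nn 1 := by
  have hdec : (∑ g : D16, x.coeff g • (MonoidAlgebra.of S D16 g - 1))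
      + (∑ g : D16, x.coeff g) • (1 : MonoidAlgebra S (DihedralGroup 8)) = x := by
    rw [Finset.sum_smul, ← Finset.sum_add_distrib]
    simp only [smul_sub, sub_add_cancel]
    exact (decomp S x).symm
  rw [← hdec]
  refine add_mem (Submodule.sum_mem _ ?_) ?_
  · intro g _
    refine memW_of_D1 S nn ⟨x.coeff g, trivial, [g], 1, rfl, ?_⟩
    rw [Pl_single, map_one, mul_one]
  · refine memW_of_D2 S nn ⟨∑ g : D16, x.coeff g, hx, [], 1, rfl, ?_⟩
    rw [show (Pl S [] * MonoidAlgebra.of S D16 1 : MonoidAlgebra S (DihedralGroup 8)) = 1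
      from by simp [Pl, MonoidAlgebra.one_def]]

lemma lam_len4 (hchar : (4:S) = 0) (L : List D16) (hL : L.length = 4) (y : D16) :
    lam S (Pl S L * MonoidAlgebra.of S D16 y) = 0 := by
  match L, hL with
  | [p,q,s,t], _ =>
    rw [Pl4split, lam_sub, lamPl3, lamPl3]
    have h1 := (good_all p q s (t*y)).2
    have h2 := (good_all p q s y).2
    obtain ⟨k, hk⟩ : ∃ k : ℤ, DL p q s (t*y) - DL p q s y = 4 * k :=
      ⟨(DL p q s (t*y) - DL p q s y)/4, by omega⟩
    rw [← Int.cast_sub, hk]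
    push_cast
    rw [hchar, zero_mul]

lemma lam_len3 (L : List D16) (hL : L.length = 3) (y : D16) :
    ∃ w : S, lam S (Pl S L * MonoidAlgebra.of S D16 y) = 2 * w := by
  match L, hL with
  | [p,q,s], _ =>
    have h1 := (good_all p q s y).1
    obtain ⟨k, hk⟩ : ∃ k : ℤ, DL p q s y = 2 * k := ⟨DL p q s y / 2, by omega⟩
    refine ⟨(k : S), ?_⟩
    rw [lamPl3, hk]
    push_cast
    ring

lemma lam_mul_len4 (hchar : (4:S) = 0) (a : AQ) (L : List D16) (hL : L.length = 4) (h : D16) :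
    lam S (a * (Pl S L * MonoidAlgebra.of S D16 h)) = 0 := by
  rw [mul_expandL, lam_sum]
  apply Finset.sum_eq_zero
  intro g _
  rw [lam_smul, ← mul_assoc, conjList, mul_assoc, ← map_mul,
    lam_len4 S hchar _ (by simp [hL]) _, mul_zero]

lemma lam_mul_len3 (a : AQ) (L : List D16) (hL : L.length = 3) (h : D16) :
    ∃ w : S, lam S (a * (Pl S L * MonoidAlgebra.of S D16 h)) = 2 * w := by
  have h3 : ∀ g : D16, ∃ w : S,
      lam S (MonoidAlgebra.of S D16 g * (Pl S L * MonoidAlgebra.of S D16 h)) = 2 * w := by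
    intro g
    rw [← mul_assoc, conjList, mul_assoc, ← map_mul]
    exact lam_len3 S _ (by simp [hL]) _
  choose w hw using h3
  refine ⟨∑ g : D16, a.coeff g * w g, ?_⟩
  rw [mul_expandL, lam_sum, Finset.mul_sum]
  apply Finset.sum_congr rfl
  intro g _
  rw [lam_smul, hw]
  ring

lemma lam_W4 (hchar : (4:S) = 0) (h2n : (2:S) ∈ nn) :
    ∀ x ∈ W S nn 4, lam S x ∈ nn ^ 2 := by
  have key : ∀ x, x ∈ W S nn 4 → ∀ a : AQ, lam S (a * x) ∈ nn ^ 2 := by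
    intro x hx
    induction hx using Submodule.span_induction with
    | mem x hxgen =>
      intro a
      rcases hxgen with (h1 | h0) | hE
      · obtain ⟨u, -, L, h, hL, rfl⟩ := h1
        rw [mul_smul_comm, lam_smul, lam_mul_len4 S hchar a L hL h, mul_zero]
        exact zero_mem _
      · obtain ⟨u, hu, L, h, hL, rfl⟩ := h0
        obtain ⟨w, hw⟩ := lam_mul_len3 S a L (by omega) h
        rw [mul_smul_comm, lam_smul, hw, show u * (2*w) = (u*2)*w from by ring]
        exact Ideal.mul_mem_right w _ (pow_two nn ▸ Ideal.mul_mem_mul hu h2n)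
      · obtain ⟨u, hu, y, rfl⟩ := hE
        rw [mul_smul_comm, lam_smul]
        exact Ideal.mul_mem_right _ _ hu
    | zero => intro a; rw [mul_zero, lam_zero]; exact zero_mem _
    | add x y hx hy ihx ihy => intro a; rw [mul_add, lam_add]; exact add_mem (ihx a) (ihy a)
    | smul b x hx ih => intro a; rw [smul_eq_mul, ← mul_assoc]; exact ih (a*b)
  intro x hx
  have h := key x hx 1
  rwa [one_mul] at h

end QSide

section HSide

/-- images of the generators `a, b, c` in `DihedralGroup 8`. -/
def fgen : Fin 3 → DihedralGroup 8
  | 0 => .sr 0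
  | 1 => .sr 1
  | 2 => .r 6

lemma pow_one_of_dvd {G : Type} [Monoid G] {x : G} {k N : ℕ} (hx : x ^ k = 1) (h : k ∣ N) :
    x ^ N = 1 := by
  obtain ⟨d, rfl⟩ := h
  rw [pow_mul, hx, one_pow]

lemma relsmapped (n m l : ℕ) (h1 : n > m) (h2 : m > l) (h3 : 2 ≤ l) :
    ∀ rel ∈ hrels n m l, FreeGroup.lift fgen rel = 1 := by
  intro rel hrel
  have hd2n : (2:ℕ) ∣ 2^n := dvd_pow_self 2 (by omega)
  have hd2m : (2:ℕ) ∣ 2^m := dvd_pow_self 2 (by omega)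
  have hd4l : (4:ℕ) ∣ 2^l := by
    have h22 : (2:ℕ)^2 ∣ 2^l := pow_dvd_pow 2 (by omega)
    simpa using h22
  have ha : (DihedralGroup.sr 0 : DihedralGroup 8) ^ 2^n = 1 := pow_one_of_dvd (by decide) hd2n
  have ha' : (DihedralGroup.sr 0 : DihedralGroup 8) ^ 2^m = 1 := pow_one_of_dvd (by decide) hd2m
  have hb : (DihedralGroup.sr 1 : DihedralGroup 8) ^ 2^m = 1 := pow_one_of_dvd (by decide) hd2m
  have hc : (DihedralGroup.r 6 : DihedralGroup 8) ^ 2^l = 1 := pow_one_of_dvd (by decide) hd4l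
  simp only [hrels, Set.mem_insert_iff, Set.mem_singleton_iff] at hrel
  rcases hrel with rfl | rfl | rfl | rfl | rfl | rfl
  · rw [map_pow, FreeGroup.lift_apply_of]
    exact ha
  · rw [map_mul, map_inv, map_pow, map_pow, FreeGroup.lift_apply_of, FreeGroup.lift_apply_of]
    show (DihedralGroup.sr 1 : DihedralGroup 8) ^ 2^m * ((DihedralGroup.sr 0 : DihedralGroup 8) ^ 2^m)⁻¹ = 1
    rw [ha', hb, inv_one, mul_one]
  · rw [map_pow, FreeGroup.lift_apply_of]
    exact hc
  · simp only [map_mul, map_inv, map_pow, FreeGroup.lift_apply_of]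
    decide
  · simp only [map_mul, map_inv, map_pow, FreeGroup.lift_apply_of]
    decide
  · simp only [map_mul, map_inv, map_pow, FreeGroup.lift_apply_of]
    decide

/-- the homomorphism `H → D₁₆`. -/
noncomputable def phiH (n m l : ℕ) (h1 : n > m) (h2 : m > l) (h3 : 2 ≤ l) :
    GrpH n m l →* DihedralGroup 8 :=
  PresentedGroup.toGroup (relsmapped n m l h1 h2 h3)

lemma phiH_c (n m l : ℕ) (h1 : n > m) (h2 : m > l) (h3 : 2 ≤ l) :
    phiH n m l h1 h2 h3 (PresentedGroup.of 2) = DihedralGroup.r 6 :=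
  PresentedGroup.toGroup.of _

lemma map_mem_pow {A B : Type} [Ring A] [Ring B] (f : A →+* B) (I : Ideal A) (K : Ideal B)
    (hIK : ∀ a ∈ I, f a ∈ K) : ∀ (k : ℕ), ∀ x ∈ I ^ k, f x ∈ K ^ k := by
  intro k
  induction k with
  | zero =>
      intro x _
      rw [show (K ^ (0:ℕ)) = (1 : Ideal B) from rfl, Ideal.one_eq_top]
      trivial
  | succ k ih =>
      intro x hx
      rw [show I ^ (k+1) = I ^ k * I from rfl] at hx
      rw [show K ^ (k+1) = K ^ k * K from rfl]
      have hle : I ^ k * I ≤ Ideal.comap f (K ^ k * K) := by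
        refine Submodule.mul_le.mpr ?_
        intro a ha b hb
        refine Ideal.mem_comap.mpr ?_
        rw [map_mul]
        exact Submodule.mul_mem_mul (ih a ha) (hIK b hb)
      exact Ideal.mem_comap.mp (hle hx)

lemma augSum (S : Type) [CommRing S] (x : MonoidAlgebra S (DihedralGroup 8)) :
    aug S (DihedralGroup 8) x = ∑ g : DihedralGroup 8, x.coeff g := by
  rw [aug, MonoidAlgebra.lift_apply, Finsupp.sum_fintype]
  · simp
  · intro i
    simp

lemma aug_comp (S : Type) [CommRing S] (G : Type) [Group G] (φ : G →* DihedralGroup 8)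
    (x : MonoidAlgebra S G) :
    aug S (DihedralGroup 8) (MonoidAlgebra.mapDomainAlgHom S S φ x) = aug S G x := by
  have h : (aug S (DihedralGroup 8)).comp (MonoidAlgebra.mapDomainAlgHom S S φ) = aug S G := by
    apply MonoidAlgebra.algHom_ext
    intro g
    simp [aug, MonoidAlgebra.mapDomainAlgHom_apply, Finsupp.mapDomain_single,
      MonoidAlgebra.lift_single]
    exact Subsingleton.elim _ _
  exact DFunLike.congr_fun h x

end HSide

theorem stmt16 (n m l : ℕ) (h1 : n > m) (h2 : m > l) (h3 : 2 ≤ l)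
    (S : Type) [CommRing S] (hchar : CharP S 4)
    (nn : Ideal S) (hnn : nn.IsMaximal) (h2n : (2 : S) ∈ nn) (h2n2 : (2 : S) ∉ nn ^ 2) :
    2 * elC S n m l ∉ relAugIdeal S nn (GrpH n m l) ^ 4 := by
  intro hmem
  have h4 : (4 : S) = 0 := by
    have h := CharP.cast_eq_zero S 4
    exact_mod_cast h
  set Φ := MonoidAlgebra.mapDomainAlgHom S S (phiH n m l h1 h2 h3) with hΦ
  have hθ : ∀ a ∈ relAugIdeal S nn (GrpH n m l), Φ a ∈ relAugIdeal S nn (DihedralGroup 8) := by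
    intro a ha
    refine Ideal.mem_comap.mpr ?_
    rw [aug_comp]
    exact Ideal.mem_comap.mp ha
  have hpow0 := map_mem_pow Φ.toRingHom _ _ hθ 4 _ hmem
  have hpow : Φ (2 * elC S n m l) ∈ relAugIdeal S nn (DihedralGroup 8) ^ 4 := hpow0
  have hval : Φ (2 * elC S n m l)
      = 2 * (MonoidAlgebra.of S (DihedralGroup 8) (DihedralGroup.r 6) - 1) := by
    rw [map_mul, map_ofNat, elC, map_sub, map_one]
    congr 2
    show MonoidAlgebra.mapDomain (R := S) (M := GrpH n m l) (phiH n m l h1 h2 h3)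
      (MonoidAlgebra.single (PresentedGroup.of 2 : GrpH n m l) (1 : S)) = _
    refine (MonoidAlgebra.mapDomain_single (f := (phiH n m l h1 h2 h3 : GrpH n m l → DihedralGroup 8))
      (a := (PresentedGroup.of 2 : GrpH n m l)) (r := (1 : S))).trans ?_
    rw [show (phiH n m l h1 h2 h3) (PresentedGroup.of 2) = DihedralGroup.r 6
      from phiH_c n m l h1 h2 h3]
    rfl
  rw [hval] at hpow
  have hθW : ∀ x ∈ relAugIdeal S nn (DihedralGroup 8), x ∈ W S nn 1 := by
    intro x hx
    refine mem_W1 S nn x ?_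
    rw [← augSum S x]
    exact Ideal.mem_comap.mp hx
  have s1 : relAugIdeal S nn (DihedralGroup 8) ^ 1 ≤ W S nn 1 := by
    rw [show relAugIdeal S nn (DihedralGroup 8) ^ 1
      = (1 : Ideal (MonoidAlgebra S (DihedralGroup 8))) * relAugIdeal S nn (DihedralGroup 8)
      from rfl]
    refine Submodule.mul_le.mpr ?_
    intro a _ b hb
    have := hθW b hb
    rw [show a * b = a • b from rfl]
    exact Submodule.smul_mem _ a this
  have s2 : relAugIdeal S nn (DihedralGroup 8) ^ 2 ≤ W S nn 2 := by
    rw [show relAugIdeal S nn (DihedralGroup 8) ^ 2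
      = relAugIdeal S nn (DihedralGroup 8) ^ 1 * relAugIdeal S nn (DihedralGroup 8) from rfl]
    refine Submodule.mul_le.mpr ?_
    intro a ha b hb
    exact W_mul_W S nn 1 le_rfl a (s1 ha) b (hθW b hb)
  have s3 : relAugIdeal S nn (DihedralGroup 8) ^ 3 ≤ W S nn 3 := by
    rw [show relAugIdeal S nn (DihedralGroup 8) ^ 3
      = relAugIdeal S nn (DihedralGroup 8) ^ 2 * relAugIdeal S nn (DihedralGroup 8) from rfl]
    refine Submodule.mul_le.mpr ?_
    intro a ha b hb
    exact W_mul_W S nn 2 (by omega) a (s2 ha) b (hθW b hb)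
  have s4 : relAugIdeal S nn (DihedralGroup 8) ^ 4 ≤ W S nn 4 := by
    rw [show relAugIdeal S nn (DihedralGroup 8) ^ 4
      = relAugIdeal S nn (DihedralGroup 8) ^ 3 * relAugIdeal S nn (DihedralGroup 8) from rfl]
    refine Submodule.mul_le.mpr ?_
    intro a ha b hb
    exact W_mul_W S nn 3 (by omega) a (s3 ha) b (hθW b hb)
  have hl : lam S (2 * (MonoidAlgebra.of S (DihedralGroup 8) (DihedralGroup.r 6) - 1)) ∈ nn ^ 2 :=
    lam_W4 S nn h4 h2n _ (s4 hpow)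
  have hlv : lam S (2 * (MonoidAlgebra.of S (DihedralGroup 8) (DihedralGroup.r 6) - 1))
      = (2 : S) := by
    rw [two_mul, lam_add, lam_sub, lam_of, lam_one,
      show mInt (DihedralGroup.r 6) = 1 from rfl]
    norm_num
  rw [hlv] at hl
  exact h2n2 hl
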